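/- In a finite discounted MDP, if actions a and a' are ε-bisimilar at every state—meaning |r(h,a) − r(h,a')| ≤ ε and the total variation distance between transition distributions P(·|h,a) and P(·|h,a') is at most ε—then |Q^π(h,a) − Q^π(h,a')| ≤ 2ε/(1−γ) · max(1, V_max) for value functions bounded by V_max; in particular with rewards in [0,1] and V_max = 1/(1−γ), the Q-value gap is O(ε/(1−γ)²). -/
import Mathlib


open Finset

/-- In a finite discounted MDP, if actions `a` and `a'` are ε-bisimilar at every
state—meaning `|r(h,a) − r(h,a')| ≤ ε` and the total variation distance between
`P(·|h,a)` and `P(·|h,a')` is at most `ε`—then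
`|Q^π(h,a) − Q^π(h,a')| ≤ 2ε/(1−γ) · max(1, Vmax)` for value functions bounded
by `Vmax`. -/
theorem Q_gap_of_bisimilar {S Act : Type*} [Fintype S]
    (γ ε Vmax : ℝ) (hγ0 : 0 ≤ γ) (hγ1 : γ < 1) (hε : 0 ≤ ε)
    (r : S → Act → ℝ) (hr : ∀ h a, r h a ∈ Set.Icc (0 : ℝ) 1)
    (P : S → Act → S → ℝ)
    (hP0 : ∀ h a s, 0 ≤ P h a s) (hP1 : ∀ h a, ∑ s, P h a s = 1)
    (V : S → ℝ) (hV : ∀ s, |V s| ≤ Vmax)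
    (Q : S → Act → ℝ)
    (hQ : ∀ h a, Q h a = r h a + γ * ∑ s, P h a s * V s)
    (a a' : Act)
    (hbisim_r : ∀ h, |r h a - r h a'| ≤ ε)
    (hbisim_P : ∀ h, (1 / 2) * ∑ s, |P h a s - P h a' s| ≤ ε) :
    ∀ h, |Q h a - Q h a'| ≤ 2 * ε / (1 - γ) * max 1 Vmax := by
  intro h
  set M := max 1 Vmax with hMdef
  have hM1 : (1 : ℝ) ≤ M := le_max_left _ _
  have hVM : ∀ s, |V s| ≤ M := fun s => (hV s).trans (le_max_right _ _)
  have hTV : ∑ s, |P h a s - P h a' s| ≤ 2 * ε := by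
    have := hbisim_P h; linarith
  have key : |Q h a - Q h a'| ≤ ε + γ * (2 * ε * M) := by
    rw [hQ h a, hQ h a']
    have heq : r h a + γ * ∑ s, P h a s * V s - (r h a' + γ * ∑ s, P h a' s * V s)
        = (r h a - r h a') + γ * ∑ s, (P h a s - P h a' s) * V s := by
      simp only [Finset.mul_sum, sub_mul, mul_sub, Finset.sum_sub_distrib]
      ring
    rw [heq]
    refine (abs_add_le _ _).trans ?_
    gcongr ?_ + ?_
    · exact hbisim_r h
    · rw [abs_mul, abs_of_nonneg hγ0]
      gcongr
      refine (Finset.abs_sum_le_sum_abs _ _).trans ?_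
      calc ∑ s, |(P h a s - P h a' s) * V s|
          ≤ ∑ s, |P h a s - P h a' s| * M := by
            apply Finset.sum_le_sum
            intro s _
            rw [abs_mul]
            exact mul_le_mul_of_nonneg_left (hVM s) (abs_nonneg _)
        _ = (∑ s, |P h a s - P h a' s|) * M := by rw [Finset.sum_mul]
        _ ≤ 2 * ε * M := by
            exact mul_le_mul_of_nonneg_right hTV (le_trans zero_le_one hM1)
  refine key.trans ?_
  rw [div_mul_eq_mul_div, le_div_iff₀ (by linarith)]
  have hM0 : (0:ℝ) ≤ M := le_trans zero_le_one hM1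
  nlinarith [mul_nonneg (mul_nonneg hε (sub_nonneg.2 hM1)) (sub_nonneg.2 hγ1.le),
    mul_nonneg (mul_nonneg hε hM0) (sq_nonneg γ),
    mul_nonneg (mul_nonneg hε hM0) (sub_nonneg.2 hγ1.le)]
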